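/- The function ρ(x) = (−1 + e^{2/(1+x²)} cos(2x/(1+x²)))/(2π) is a probability density on ℝ: it is nonnegative and integrates to 1. -/

import Mathlib

open MeasureTheory Filter Topology

noncomputable section

lemma aux_exp (u : ℝ) (hu : 0 ≤ u) : 1 ≤ Real.exp u * (1 - u + u^2/2) := by
  have h := Real.sum_le_exp_of_nonneg hu 4
  simp [Finset.sum_range_succ, Nat.factorial] at h
  nlinarith [sq_nonneg u, pow_nonneg hu 3, sq_nonneg (u-1), Real.exp_pos u]

lemma aux_nonneg (x : ℝ) :
    0 ≤ -1 + Real.exp (2/(1+x^2)) * Real.cos (2*x/(1+x^2)) := by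
  have hs : (0:ℝ) < 1 + x^2 := by positivity
  set u := 2/(1+x^2) with hud
  set v := 2*x/(1+x^2) with hvd
  have hu : 0 ≤ u := by positivity
  have hvu : 1 - v^2/2 = 1 - u + u^2/2 := by
    rw [hud, hvd]; field_simp; ring
  have h1 : 1 - v^2/2 ≤ Real.cos v := Real.one_sub_sq_div_two_le_cos
  have h2 : Real.exp u * (1 - v^2/2) ≤ Real.exp u * Real.cos v :=
    mul_le_mul_of_nonneg_left h1 (Real.exp_nonneg u)
  rw [hvu] at h2
  have h3 := aux_exp u hu
  linarith



-- φ x = (1 - x I)⁻¹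
def phi (x : ℝ) : ℂ := (1 - x * Complex.I)⁻¹

lemma one_sub_ne (x : ℝ) : (1 - x * Complex.I : ℂ) ≠ 0 := by
  intro h
  have := congrArg Complex.re h
  simp at this

lemma norm_one_sub (x : ℝ) : ‖(1 - x * Complex.I : ℂ)‖ = Real.sqrt (1 + x^2) := by
  rw [Complex.norm_def]
  congr 1
  simp [Complex.normSq_apply]
  ring

lemma norm_phi (x : ℝ) : ‖phi x‖ = (Real.sqrt (1 + x^2))⁻¹ := by
  rw [phi, norm_inv, norm_one_sub]

lemma sqrt_ge_one (x : ℝ) : 1 ≤ Real.sqrt (1 + x^2) := by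
  nlinarith [Real.sq_sqrt (show (0:ℝ) ≤ 1+x^2 by positivity), Real.sqrt_nonneg (1+x^2), sq_nonneg x]

lemma norm_phi_le_one (x : ℝ) : ‖phi x‖ ≤ 1 := by
  rw [norm_phi]
  exact inv_le_one_of_one_le₀ (sqrt_ge_one x)

lemma norm_phi_pow_le (x : ℝ) (k : ℕ) (hk : 2 ≤ k) :
    ‖(phi x)^k‖ ≤ (1 + x^2)⁻¹ := by
  have hs : (0:ℝ) < 1 + x^2 := by positivity
  rw [norm_pow, norm_phi]
  rw [inv_pow]
  apply inv_anti₀ hs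
  calc 1 + x^2 = Real.sqrt (1+x^2) ^ 2 := by rw [Real.sq_sqrt hs.le]
    _ ≤ Real.sqrt (1+x^2) ^ k := pow_le_pow_right₀ (sqrt_ge_one x) hk

lemma hasDerivAt_phi (x : ℝ) :
    HasDerivAt phi (Complex.I * (phi x)^2) x := by
  have h1 : HasDerivAt (fun x : ℝ => (1 - x * Complex.I : ℂ)) (-Complex.I) x := by
    simpa using ((hasDerivAt_id x).ofReal_comp.mul_const Complex.I).const_sub 1
  have h2 : HasDerivAt (fun z : ℂ => z⁻¹) (-((1 - x*Complex.I)^2)⁻¹) (1 - x*Complex.I) :=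
    hasDerivAt_inv (one_sub_ne x)
  have h3 := h2.scomp (x := x) h1
  refine h3.congr_deriv ?_
  rw [phi]
  rw [smul_eq_mul, inv_pow]
  ring

lemma cont_phi : Continuous phi := by
  apply Continuous.inv₀ _ one_sub_ne
  exact continuous_const.sub (Complex.continuous_ofReal.mul continuous_const)

lemma integrable_phi_pow (k : ℕ) (hk : 2 ≤ k) :
    Integrable (fun x : ℝ => (phi x)^k) := by
  apply Integrable.mono' integrable_inv_one_add_sq
  · exact ((cont_phi.pow k)).aestronglyMeasurable
  · exact Filter.Eventually.of_forall fun x => norm_phi_pow_le x k hk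

lemma abs_le_sqrt (x : ℝ) : |x| ≤ Real.sqrt (1 + x^2) := by
  rw [← Real.sqrt_sq_eq_abs]
  exact Real.sqrt_le_sqrt (by nlinarith)

lemma sqrt_tendsto_top : Tendsto (fun x : ℝ => Real.sqrt (1 + x^2)) atTop atTop :=
  tendsto_atTop_mono abs_le_sqrt tendsto_abs_atTop_atTop

lemma sqrt_tendsto_bot : Tendsto (fun x : ℝ => Real.sqrt (1 + x^2)) atBot atTop :=
  tendsto_atTop_mono abs_le_sqrt tendsto_abs_atBot_atTop

lemma integral_phi_pow (m : ℕ) : ∫ x : ℝ, (phi x)^(m+2) = 0 := by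
  set F : ℝ → ℂ := fun x => (((m:ℂ)+1) * Complex.I)⁻¹ * (phi x)^(m+1) with hF
  have hne : (((m:ℂ)+1) * Complex.I) ≠ 0 := by
    apply mul_ne_zero _ Complex.I_ne_zero
    exact Nat.cast_add_one_ne_zero m
  have hderiv : ∀ x, HasDerivAt F ((phi x)^(m+2)) x := by
    intro x
    have hp : HasDerivAt (fun z : ℂ => z^(m+1)) (((m:ℂ)+1) * (phi x)^m) (phi x) := by
      simpa using hasDerivAt_pow (m+1) (phi x)
    have h := (hp.scomp (x := x) (hasDerivAt_phi x)).const_mul ((((m:ℂ)+1) * Complex.I)⁻¹)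
    refine h.congr_deriv ?_
    simp only [smul_eq_mul]
    field_simp
    ring
  have hnormF : ∀ x, ‖F x‖ ≤ (Real.sqrt (1 + x^2))⁻¹ := by
    intro x
    rw [hF]
    rw [norm_mul, norm_inv]
    rw [norm_pow]
    calc ‖(((m:ℂ)+1) * Complex.I)‖⁻¹ * ‖phi x‖^(m+1)
        ≤ 1 * ‖phi x‖^1 := by
          apply mul_le_mul
          · rw [inv_le_one_iff₀]
            right
            rw [norm_mul, Complex.norm_I, mul_one]
            have : ((m:ℂ)+1) = ((m+1 : ℕ) : ℂ) := by push_cast; ring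
            rw [this, Complex.norm_natCast]
            exact_mod_cast Nat.one_le_iff_ne_zero.mpr (Nat.succ_ne_zero m)
          · exact pow_le_pow_of_le_one (norm_nonneg _) (norm_phi_le_one x) (by omega)
          · positivity
          · norm_num
      _ = (Real.sqrt (1 + x^2))⁻¹ := by rw [one_mul, pow_one, norm_phi]
  have hlim_top : Tendsto F atTop (𝓝 0) :=
    squeeze_zero_norm hnormF (sqrt_tendsto_top.inv_tendsto_atTop)
  have hlim_bot : Tendsto F atBot (𝓝 0) :=
    squeeze_zero_norm hnormF (sqrt_tendsto_bot.inv_tendsto_atTop)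
  have := integral_of_hasDerivAt_of_tendsto hderiv (integrable_phi_pow (m+2) (by omega))
    hlim_bot hlim_top
  simpa using this

lemma hasSum_series (x : ℝ) :
    HasSum (fun n : ℕ => (2 * phi x)^(n+1) / (Nat.factorial (n+1) : ℂ)) (Complex.exp (2 * phi x) - 1) := by
  have h0 : HasSum (fun n : ℕ => (2*phi x)^n / (Nat.factorial n : ℂ)) (Complex.exp (2*phi x)) := by
    rw [Complex.exp_eq_exp_ℂ]
    exact NormedSpace.expSeries_div_hasSum_exp (2*phi x)
  have h1 := (hasSum_nat_add_iff' (f := fun n : ℕ => (2*phi x)^n / (Nat.factorial n : ℂ)) 1).mpr h0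
  simpa using h1

lemma phi_re (x : ℝ) : (phi x).re = 1/(1+x^2) := by
  simp [phi, Complex.inv_re, Complex.normSq_apply]
  ring_nf

lemma phi_im (x : ℝ) : (phi x).im = x/(1+x^2) := by
  simp [phi, Complex.inv_im, Complex.normSq_apply]
  ring_nf

lemma re_val (x : ℝ) : (Complex.exp (2*phi x) - 1).re
    = -1 + Real.exp (2/(1+x^2)) * Real.cos (2*x/(1+x^2)) := by
  have h1 : (2*phi x).re = 2/(1+x^2) := by
    simp [Complex.mul_re, phi_re, phi_im]; ring
  have h2 : (2*phi x).im = 2*x/(1+x^2) := by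
    simp [Complex.mul_im, phi_re, phi_im]; ring
  rw [Complex.sub_re, Complex.exp_re, h1, h2]
  simp
  ring

def g (n : ℕ) (x : ℝ) : ℝ := ((2 * phi x)^(n+1) / (Nat.factorial (n+1) : ℂ)).re

lemma hasSum_g (x : ℝ) :
    HasSum (fun n => g n x) (-1 + Real.exp (2/(1+x^2)) * Real.cos (2*x/(1+x^2))) := by
  rw [← re_val x]
  exact (hasSum_series x).mapL Complex.reCLM

lemma g_zero (x : ℝ) : g 0 x = 2 * (1+x^2)⁻¹ := by
  simp [g, Complex.mul_re, phi_re, phi_im]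

lemma g_bound (n : ℕ) (x : ℝ) : |g n x| ≤ 2^(n+1)/(Nat.factorial (n+1)) * (1+x^2)⁻¹ := by
  have hs : (0:ℝ) < 1 + x^2 := by positivity
  match n with
  | 0 =>
    rw [g_zero, abs_of_nonneg (by positivity)]
    norm_num [Nat.factorial]
  | Nat.succ m =>
    calc |g (m+1) x| ≤ ‖(2 * phi x)^(m+2) / (Nat.factorial (m+2) : ℂ)‖ :=
          Complex.abs_re_le_norm _
      _ = 2^(m+2)/(Nat.factorial (m+2)) * ‖(phi x)^(m+2)‖ := by
          rw [norm_div, mul_pow, norm_mul, norm_pow]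
          simp [Complex.norm_natCast]
          ring
      _ ≤ 2^(m+2)/(Nat.factorial (m+2)) * (1+x^2)⁻¹ := by
          apply mul_le_mul_of_nonneg_left (norm_phi_pow_le x (m+2) (by omega))
          positivity

lemma cont_g (n : ℕ) : Continuous (g n) := by
  apply Complex.continuous_re.comp
  exact ((continuous_const.mul cont_phi).pow (n+1)).div_const _

lemma integrable_g (n : ℕ) : Integrable (g n) := by
  apply Integrable.mono' (integrable_inv_one_add_sq.const_mul (2^(n+1)/(Nat.factorial (n+1))))
  · exact (cont_g n).aestronglyMeasurable
  · exact Filter.Eventually.of_forall fun x => by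
      simpa [Real.norm_eq_abs] using g_bound n x

lemma summable_maj : Summable fun n : ℕ => (2:ℝ)^(n+1)/(Nat.factorial (n+1)) * Real.pi := by
  apply Summable.mul_right
  have h := Real.summable_pow_div_factorial 2
  exact (summable_nat_add_iff 1).mpr h

lemma summable_integral_g : Summable fun n => ∫ x : ℝ, ‖g n x‖ := by
  refine Summable.of_nonneg_of_le (fun n => integral_nonneg fun x => norm_nonneg _)
    (fun n => ?_) summable_maj
  calc ∫ x : ℝ, ‖g n x‖ ≤ ∫ x : ℝ, (2:ℝ)^(n+1)/(Nat.factorial (n+1)) * (1+x^2)⁻¹ := by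
        apply integral_mono_of_nonneg
          (Filter.Eventually.of_forall fun x => norm_nonneg _)
          (integrable_inv_one_add_sq.const_mul _)
          (Filter.Eventually.of_forall fun x => by
            simpa [Real.norm_eq_abs] using g_bound n x)
    _ = 2^(n+1)/(Nat.factorial (n+1)) * Real.pi := by
        rw [integral_const_mul, integral_univ_inv_one_add_sq]

lemma integral_g_zero : ∫ x : ℝ, g 0 x = 2 * Real.pi := by
  simp_rw [g_zero]
  rw [integral_const_mul, integral_univ_inv_one_add_sq]

lemma integral_g_succ (m : ℕ) : ∫ x : ℝ, g (m+1) x = 0 := by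
  have hc : ∀ x : ℝ, (2 * phi x)^(m+2) / (Nat.factorial (m+2) : ℂ)
      = ((2:ℂ)^(m+2) / (Nat.factorial (m+2) : ℂ)) * (phi x)^(m+2) := by
    intro x; rw [mul_pow]; ring
  have hint : Integrable (fun x : ℝ => (2 * phi x)^(m+2) / (Nat.factorial (m+2) : ℂ)) := by
    simp_rw [hc]
    exact (integrable_phi_pow (m+2) (by omega)).const_mul _
  have hcomm := ContinuousLinearMap.integral_comp_comm Complex.reCLM hint
  have hg : ∫ x : ℝ, g (m+1) x
      = Complex.reCLM (∫ x : ℝ, (2 * phi x)^(m+2) / (Nat.factorial (m+2) : ℂ)) := by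
    rw [← hcomm]; rfl
  rw [hg]
  have : (∫ x : ℝ, (2 * phi x)^(m+2) / (Nat.factorial (m+2) : ℂ)) = 0 := by
    simp_rw [hc]
    rw [integral_const_mul, integral_phi_pow m, mul_zero]
  rw [this]
  simp

theorem stmt5 :
    (∀ x : ℝ,
      0 ≤ (-1 + Real.exp (2/(1+x^2)) * Real.cos (2*x/(1+x^2))) / (2*Real.pi)) ∧
    ∫ x : ℝ, (-1 + Real.exp (2/(1+x^2)) * Real.cos (2*x/(1+x^2))) / (2*Real.pi) = 1 := by
  constructor
  · intro x
    exact div_nonneg (aux_nonneg x) (by positivity)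
  · have key : ∫ x : ℝ, (-1 + Real.exp (2/(1+x^2)) * Real.cos (2*x/(1+x^2))) = 2 * Real.pi := by
      have h1 : ∀ x : ℝ, (-1 + Real.exp (2/(1+x^2)) * Real.cos (2*x/(1+x^2)))
          = ∑' n, g n x := fun x => (hasSum_g x).tsum_eq.symm
    -- swap
      have h2 := integral_tsum_of_summable_integral_norm integrable_g summable_integral_g
      have h3 : ∑' n, (∫ x : ℝ, g n x) = 2 * Real.pi := by
        rw [tsum_eq_single 0]
        · exact integral_g_zero
        · intro n hn
          match n with
          | 0 => exact absurd rfl hn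
          | Nat.succ m => exact integral_g_succ m
      calc ∫ x : ℝ, (-1 + Real.exp (2/(1+x^2)) * Real.cos (2*x/(1+x^2)))
          = ∫ x : ℝ, ∑' n, g n x := by simp_rw [h1]
        _ = ∑' n, (∫ x : ℝ, g n x) := h2.symm
        _ = 2 * Real.pi := h3
    rw [integral_div, key]
    rw [div_self (by positivity)]
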